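/- Let Ω ⊂ ℝⁿ be a nonempty open convex set, f : Ω → ℝ locally semiconvex with linear modulus, x₀ ∈ Ω, and G a bounded open set with x₀ ∈ G ⊂ Ḡ ⊂ Ω. Suppose x₀ is an Alexandrov point of f, i.e. there exist p ∈ ℝⁿ and a symmetric matrix B with f(x) = f(x₀) + p·(x−x₀) + (x−x₀)ᵀB(x−x₀) + o(|x−x₀|²). Then there exists Λ > 0 such that for all λ ≥ Λ: f(x₀) = C^u_λ(f_G)(x₀) = C^l_λ(f_G)(x₀) and ∇f(x₀) = ∇C^u_λ(f_G)(x₀) = ∇C^l_λ(f_G)(x₀). -/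

import Mathlib

open Filter Metric Set
open scoped Topology RealInnerProductSpace

/-- The convex envelope of `g`: pointwise supremum of convex functions below `g`. -/
noncomputable def convEnv {E : Type*} [NormedAddCommGroup E] [NormedSpace ℝ E]
    (g : E → ℝ) (x : E) : ℝ :=
  sSup {y : ℝ | ∃ h : E → ℝ, ConvexOn ℝ Set.univ h ∧ (∀ z, h z ≤ g z) ∧ y = h x}

/-- Upper compensated convex transform. -/
noncomputable def upperT {E : Type*} [NormedAddCommGroup E] [NormedSpace ℝ E]
    (lam : ℝ) (g : E → ℝ) (x : E) : ℝ :=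
  lam * ‖x‖ ^ 2 - convEnv (fun y => lam * ‖y‖ ^ 2 - g y) x

/-- Lower compensated convex transform. -/
noncomputable def lowerT {E : Type*} [NormedAddCommGroup E] [NormedSpace ℝ E]
    (lam : ℝ) (g : E → ℝ) (x : E) : ℝ :=
  convEnv (fun y => g y + lam * ‖y‖ ^ 2) x - lam * ‖x‖ ^ 2

/-- A modulus: nondecreasing, upper semicontinuous, nonnegative, tending to `0` at `0+`. -/
def Modulus (ω : ℝ → ℝ) : Prop :=
  Monotone ω ∧ UpperSemicontinuous ω ∧ (∀ t, 0 ≤ ω t) ∧ Tendsto ω (𝓝[>] (0 : ℝ)) (𝓝 0)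

/-- `f` is semiconvex on `K` with modulus `ω`. -/
def SemiconvexOnWith {n : ℕ} (K : Set (EuclideanSpace ℝ (Fin n))) (ω : ℝ → ℝ)
    (f : EuclideanSpace ℝ (Fin n) → ℝ) : Prop :=
  ∀ x ∈ K, ∀ y ∈ K, ∀ s ∈ Set.Icc (0 : ℝ) 1,
    s * f x + (1 - s) * f y - f (s • x + (1 - s) • y) ≥
      -(s * (1 - s) * ‖x - y‖ * ω ‖x - y‖)

/-- `f` is locally semiconvex on `Ω`: semiconvex with some modulus on each convex compact
subset of `Ω`. -/
def LocSemiconvexOn {n : ℕ} (Ω : Set (EuclideanSpace ℝ (Fin n)))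
    (f : EuclideanSpace ℝ (Fin n) → ℝ) : Prop :=
  ∀ K ⊆ Ω, IsCompact K → Convex ℝ K → ∃ ω, Modulus ω ∧ SemiconvexOnWith K ω f

/-- The Fréchet subdifferential of a locally semiconvex function `f` at `x`. -/
def frechetSubdiff {n : ℕ} (Ω : Set (EuclideanSpace ℝ (Fin n)))
    (f : EuclideanSpace ℝ (Fin n) → ℝ) (x : EuclideanSpace ℝ (Fin n)) :
    Set (EuclideanSpace ℝ (Fin n)) :=
  {p | ∃ K ω, K ⊆ Ω ∧ IsCompact K ∧ Convex ℝ K ∧ x ∈ interior K ∧ Modulus ω ∧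
    SemiconvexOnWith K ω f ∧
    ∀ y ∈ K, f y - f x - ⟪p, y - x⟫ ≥ -(‖y - x‖ * ω ‖y - x‖)}

/-- `(c, r)` is a minimal bounding ball of `K`. -/
def IsMinBall {E : Type*} [NormedAddCommGroup E] (K : Set E) (c : E) (r : ℝ) : Prop :=
  0 ≤ r ∧ K ⊆ Metric.closedBall c r ∧ ∀ c' r', K ⊆ Metric.closedBall c' r' → r ≤ r'

/-- `f` is locally semiconvex with linear modulus on `Ω`. -/
def LocSemiconvexLinOn {n : ℕ} (Ω : Set (EuclideanSpace ℝ (Fin n)))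
    (f : EuclideanSpace ℝ (Fin n) → ℝ) : Prop :=
  ∀ K ⊆ Ω, IsCompact K → Convex ℝ K →
    ∃ (lamK : ℝ) (g : EuclideanSpace ℝ (Fin n) → ℝ), 0 ≤ lamK ∧
      ConvexOn ℝ K g ∧ ContinuousOn g K ∧ ∀ x ∈ K, f x = g x - lamK * ‖x‖ ^ 2

section Helpers



set_option linter.unusedSectionVars false

variable {E : Type*} [NormedAddCommGroup E] [InnerProductSpace ℝ E] [CompleteSpace E]

lemma convexOn_inner_add_const (a : E) (c : ℝ) :
    ConvexOn ℝ Set.univ (fun x => ⟪a, x⟫ + c) := by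
  refine ⟨convex_univ, fun x _ y _ s t hs ht hst => le_of_eq ?_⟩
  simp only [inner_add_right, real_inner_smul_right, smul_eq_mul]
  linear_combination -c * hst

lemma hasGradientAt_of_quadratic_bound (F : E → ℝ) (a : E) (c M : ℝ) (x₀ : E)
    (h0 : F x₀ = ⟪a, x₀⟫ + c)
    (hb : ∀ᶠ x in 𝓝 x₀, |F x - (⟪a, x⟫ + c)| ≤ M * ‖x - x₀‖ ^ 2) :
    HasGradientAt F a x₀ := by
  rw [hasGradientAt_iff_isLittleO]
  have key : ∀ x, F x - F x₀ - ⟪a, x - x₀⟫ = F x - (⟪a, x⟫ + c) := by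
    intro x
    rw [h0, inner_sub_right]; ring
  rw [Asymptotics.isLittleO_iff]
  intro ε hε
  have hM : ∀ᶠ x in 𝓝 x₀, ‖x - x₀‖ * |M| ≤ ε := by
    have : Tendsto (fun x => ‖x - x₀‖ * |M|) (𝓝 x₀) (𝓝 (‖x₀ - x₀‖ * |M|)) :=
      (Tendsto.sub tendsto_id tendsto_const_nhds).norm.mul_const _
    simp only [sub_self, norm_zero, zero_mul] at this
    exact this.eventually_le_const hε
  filter_upwards [hb, hM] with x hx hxM
  rw [key]
  calc ‖F x - (⟪a, x⟫ + c)‖ ≤ M * ‖x - x₀‖ ^ 2 := by rwa [Real.norm_eq_abs]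
    _ ≤ |M| * ‖x - x₀‖ ^ 2 := by
        have := le_abs_self M
        nlinarith [sq_nonneg ‖x - x₀‖]
    _ = (‖x - x₀‖ * |M|) * ‖x - x₀‖ := by ring
    _ ≤ ε * ‖x - x₀‖ := by
        have := norm_nonneg (x - x₀)
        nlinarith

lemma HasGradientAt.sub'' {f g : E → ℝ} {f' g' x : E}
    (hf : HasGradientAt f f' x) (hg : HasGradientAt g g' x) :
    HasGradientAt (fun y => f y - g y) (f' - g') x := by
  rw [hasGradientAt_iff_hasFDerivAt] at *
  rw [map_sub]
  exact hf.sub hg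

lemma convEnv_touch (g : E → ℝ) (a : E) (c M : ℝ) (x₀ : E)
    (h1 : ∀ x, 0 ≤ g x - (⟪a, x⟫ + c))
    (h2 : ∀ x, g x - (⟪a, x⟫ + c) ≤ M * ‖x - x₀‖ ^ 2) :
    convEnv g x₀ = g x₀ ∧ HasGradientAt (convEnv g) a x₀ := by
  have hx₀eq : g x₀ = ⟪a, x₀⟫ + c := by
    have ha := h1 x₀
    have hb := h2 x₀
    simp only [sub_self, norm_zero] at hb
    have h00 : (0:ℝ)^2 = 0 := by norm_num
    rw [h00, mul_zero] at hb
    linarith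
  have henv : ∀ x, (⟪a, x⟫ + c ≤ convEnv g x) ∧ convEnv g x ≤ g x := by
    intro x
    have hmem : (⟪a, x⟫ + c) ∈
        {y : ℝ | ∃ h : E → ℝ, ConvexOn ℝ Set.univ h ∧ (∀ z, h z ≤ g z) ∧ y = h x} :=
      ⟨fun z => ⟪a, z⟫ + c, convexOn_inner_add_const a c,
        fun z => by have := h1 z; dsimp only; linarith, rfl⟩
    have hbdd : BddAbove
        {y : ℝ | ∃ h : E → ℝ, ConvexOn ℝ Set.univ h ∧ (∀ z, h z ≤ g z) ∧ y = h x} := by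
      refine ⟨g x, ?_⟩
      rintro y ⟨h, _, hle, rfl⟩
      exact hle x
    exact ⟨le_csSup hbdd hmem, csSup_le ⟨_, hmem⟩ (by rintro y ⟨h, _, hle, rfl⟩; exact hle x)⟩
  have hval : convEnv g x₀ = g x₀ := by
    have h1' := (henv x₀).1
    have h2' := (henv x₀).2
    rw [hx₀eq] at *
    linarith
  refine ⟨hval, ?_⟩
  apply hasGradientAt_of_quadratic_bound (convEnv g) a c M x₀ (by rw [hval, hx₀eq])
  apply Eventually.of_forall
  intro x
  have hl := (henv x).1
  have hu := (henv x).2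
  have := h2 x
  rw [abs_le]
  exact ⟨by nlinarith [h1 x, h2 x], by linarith⟩

end Helpers

set_option maxHeartbeats 1000000 in
theorem stmt_15 {n : ℕ} (Ω : Set (EuclideanSpace ℝ (Fin n))) (hΩne : Ω.Nonempty)
    (hΩo : IsOpen Ω) (hΩcv : Convex ℝ Ω)
    (f : EuclideanSpace ℝ (Fin n) → ℝ) (hf : LocSemiconvexLinOn Ω f)
    (x₀ : EuclideanSpace ℝ (Fin n)) (hx₀ : x₀ ∈ Ω)
    (G : Set (EuclideanSpace ℝ (Fin n))) (hGo : IsOpen G) (hGb : Bornology.IsBounded G)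
    (hx₀G : x₀ ∈ G) (hGΩ : closure G ⊆ Ω)
    (L : NNReal) (hLip : LipschitzOnWith L f (closure G))
    (fG : EuclideanSpace ℝ (Fin n) → ℝ) (hfG : LipschitzWith L fG)
    (hext : ∀ y ∈ closure G, fG y = f y)
    -- `x₀` is an Alexandrov point of `f`:
    (p : EuclideanSpace ℝ (Fin n))
    (B : EuclideanSpace ℝ (Fin n) →L[ℝ] EuclideanSpace ℝ (Fin n))
    (hBsym : ∀ v w, ⟪B v, w⟫ = ⟪v, B w⟫)
    (hAlex : Tendsto
      (fun x => (f x - f x₀ - ⟪p, x - x₀⟫ - ⟪x - x₀, B (x - x₀)⟫) / ‖x - x₀‖ ^ 2)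
      (𝓝[≠] x₀) (𝓝 0)) :
    ∃ Λ : ℝ, 0 < Λ ∧ ∀ lam : ℝ, Λ ≤ lam →
      (f x₀ = upperT lam fG x₀ ∧ f x₀ = lowerT lam fG x₀) ∧
      DifferentiableAt ℝ f x₀ ∧
      gradient f x₀ = gradient (upperT lam fG) x₀ ∧
      gradient f x₀ = gradient (lowerT lam fG) x₀ := by
  set c₀ : ℝ := f x₀ - ⟪p, x₀⟫ with hc₀
  have hqx₀ : ⟪p, x₀⟫ + c₀ = f x₀ := by rw [hc₀]; ring
  have hfGx₀ : fG x₀ = f x₀ := hext x₀ (subset_closure hx₀G)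
  -- ball inside G
  obtain ⟨δ₁, hδ₁pos, hδ₁⟩ := Metric.isOpen_iff.1 hGo x₀ hx₀G
  -- quantitative Alexandrov bound
  have h1 : ∀ᶠ x in 𝓝[≠] x₀,
      |(f x - f x₀ - ⟪p, x - x₀⟫ - ⟪x - x₀, B (x - x₀)⟫) / ‖x - x₀‖ ^ 2| < 1 := by
    have h := Metric.tendsto_nhds.1 hAlex 1 one_pos
    simpa only [Real.dist_eq, sub_zero] using h
  rw [eventually_nhdsWithin_iff, Metric.eventually_nhds_iff] at h1
  obtain ⟨δ₂, hδ₂pos, h2⟩ := h1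
  set δ : ℝ := min (δ₁ / 2) (δ₂ / 2) with hδdef
  have hδpos : 0 < δ := lt_min (by linarith) (by linarith)
  have hδG : Metric.closedBall x₀ δ ⊆ G := by
    intro x hx
    apply hδ₁
    rw [Metric.mem_closedBall] at hx
    rw [Metric.mem_ball]
    have : δ ≤ δ₁ / 2 := min_le_left _ _
    linarith
  set M₀ : ℝ := max (1 + ‖B‖) (((L : ℝ) + ‖p‖) / δ) with hM₀def
  have hM₀pos : 0 < M₀ := lt_of_lt_of_le (by positivity) (le_max_left _ _)
  -- the key global bound
  have hbound : ∀ x, |fG x - (⟪p, x⟫ + c₀)| ≤ M₀ * ‖x - x₀‖ ^ 2 := by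
    intro x
    have hrw : ⟪p, x⟫ + c₀ = f x₀ + ⟪p, x - x₀⟫ := by
      rw [inner_sub_right, hc₀]; ring
    by_cases hx : dist x x₀ ≤ δ
    · -- near: fG x = f x and the Alexandrov bound applies
      have hxG : fG x = f x := hext x (subset_closure (hδG hx))
      rcases eq_or_ne x x₀ with heq | hne
      · subst heq
        rw [hfGx₀, hqx₀, sub_self, abs_zero]
        exact mul_nonneg hM₀pos.le (sq_nonneg _)
      · have hd : dist x x₀ < δ₂ := lt_of_le_of_lt hx
          (lt_of_le_of_lt (min_le_right _ _) (by linarith))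
        have hq := h2 hd hne
        have hpos : (0:ℝ) < ‖x - x₀‖ ^ 2 :=
          pow_pos (norm_sub_pos_iff.mpr hne) 2
        rw [abs_div, abs_of_pos hpos, div_lt_one hpos] at hq
        have hB : |⟪x - x₀, B (x - x₀)⟫| ≤ ‖B‖ * ‖x - x₀‖ ^ 2 := by
          calc |⟪x - x₀, B (x - x₀)⟫| ≤ ‖x - x₀‖ * ‖B (x - x₀)‖ :=
                abs_real_inner_le_norm _ _
            _ ≤ ‖x - x₀‖ * (‖B‖ * ‖x - x₀‖) := by
                have := B.le_opNorm (x - x₀)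
                have := norm_nonneg (x - x₀)
                nlinarith
            _ = ‖B‖ * ‖x - x₀‖ ^ 2 := by ring
        have hM : 1 + ‖B‖ ≤ M₀ := le_max_left _ _
        rw [hxG, hrw]
        have habs := abs_le.1 (le_of_lt hq)
        have habs' := abs_le.1 hB
        rw [abs_le]
        constructor
        · nlinarith [sq_nonneg ‖x - x₀‖]
        · nlinarith [sq_nonneg ‖x - x₀‖]
    · -- far: Lipschitz bound
      push_neg at hx
      have ht : δ ≤ ‖x - x₀‖ := by rw [← dist_eq_norm]; linarith
      have hL : |fG x - fG x₀| ≤ (L : ℝ) * ‖x - x₀‖ := by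
        have := hfG.dist_le_mul x x₀
        rwa [Real.dist_eq, dist_eq_norm] at this
      have hp : |⟪p, x - x₀⟫| ≤ ‖p‖ * ‖x - x₀‖ := abs_real_inner_le_norm _ _
      have hM : ((L : ℝ) + ‖p‖) / δ ≤ M₀ := le_max_right _ _
      have key : ((L : ℝ) + ‖p‖) * ‖x - x₀‖ ≤ M₀ * ‖x - x₀‖ ^ 2 := by
        have h1' : ((L : ℝ) + ‖p‖) ≤ M₀ * δ := by
          rw [div_le_iff₀ hδpos] at hM
          linarith
        have h2' : ((L : ℝ) + ‖p‖) * ‖x - x₀‖ ≤ M₀ * δ * ‖x - x₀‖ :=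
          mul_le_mul_of_nonneg_right h1' (norm_nonneg _)
        have h3' : M₀ * δ * ‖x - x₀‖ ≤ M₀ * ‖x - x₀‖ * ‖x - x₀‖ := by
          have := mul_le_mul_of_nonneg_left ht hM₀pos.le
          nlinarith [norm_nonneg (x - x₀)]
        nlinarith
      rw [hrw, ← hfGx₀]
      have habs := abs_le.1 hL
      have habs' := abs_le.1 hp
      rw [abs_le]
      constructor <;> nlinarith [L.coe_nonneg, norm_nonneg p, norm_nonneg (x - x₀)]
  -- gradient of f at x₀
  have hgradf : HasGradientAt f p x₀ := by
    apply hasGradientAt_of_quadratic_bound f p c₀ M₀ x₀ hqx₀.symm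
    filter_upwards [Metric.closedBall_mem_nhds x₀ hδpos] with x hx
    rw [← hext x (subset_closure (hδG hx))]
    exact hbound x
  refine ⟨M₀ + 1, by linarith, fun lam hlam => ?_⟩
  have hlamM : M₀ ≤ lam := by linarith
  have hlam0 : (0:ℝ) ≤ lam := by linarith
  -- LOWER transform
  set glow : EuclideanSpace ℝ (Fin n) → ℝ := fun y => fG y + lam * ‖y‖ ^ 2 with hglow
  set alow : EuclideanSpace ℝ (Fin n) := p + (2 * lam) • x₀ with halow
  have hkeylow : ∀ x, glow x - (⟪alow, x⟫ + (c₀ - lam * ‖x₀‖ ^ 2)) =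
      (fG x - (⟪p, x⟫ + c₀)) + lam * ‖x - x₀‖ ^ 2 := by
    intro x
    rw [hglow, halow]
    simp only [inner_add_left, real_inner_smul_left]
    rw [norm_sub_sq_real, real_inner_comm x x₀]
    ring
  have hlow1 : ∀ x, 0 ≤ glow x - (⟪alow, x⟫ + (c₀ - lam * ‖x₀‖ ^ 2)) := by
    intro x
    have hk := hkeylow x
    have hb' := abs_le.1 (hbound x)
    nlinarith [sq_nonneg ‖x - x₀‖]
  have hlow2 : ∀ x, glow x - (⟪alow, x⟫ + (c₀ - lam * ‖x₀‖ ^ 2)) ≤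
      (lam + M₀) * ‖x - x₀‖ ^ 2 := by
    intro x
    have hk := hkeylow x
    have hb' := abs_le.1 (hbound x)
    nlinarith [sq_nonneg ‖x - x₀‖]
  obtain ⟨hlowval, hlowgradC⟩ :=
    convEnv_touch glow alow (c₀ - lam * ‖x₀‖ ^ 2) (lam + M₀) x₀ hlow1 hlow2
  -- gradient of λ‖·‖²
  have hsq : HasGradientAt (fun x : EuclideanSpace ℝ (Fin n) => lam * ‖x‖ ^ 2)
      ((2 * lam) • x₀) x₀ := by
    apply hasGradientAt_of_quadratic_bound _ _ (-(lam * ‖x₀‖ ^ 2)) lam x₀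
    · rw [real_inner_smul_left, real_inner_self_eq_norm_sq]; ring
    · apply Eventually.of_forall
      intro x
      have hid : lam * ‖x‖ ^ 2 - (⟪(2 * lam) • x₀, x⟫ + -(lam * ‖x₀‖ ^ 2)) =
          lam * ‖x - x₀‖ ^ 2 := by
        rw [real_inner_smul_left, norm_sub_sq_real, real_inner_comm x x₀]
        ring
      rw [hid, abs_of_nonneg (by positivity)]
  have hlowgrad : HasGradientAt (lowerT lam fG) p x₀ := by
    have h := hlowgradC.sub'' hsq
    have heq : alow - (2 * lam) • x₀ = p := by rw [halow]; abel
    rw [heq] at h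
    exact h
  -- UPPER transform
  set gup : EuclideanSpace ℝ (Fin n) → ℝ := fun y => lam * ‖y‖ ^ 2 - fG y with hgup
  set aup : EuclideanSpace ℝ (Fin n) := (2 * lam) • x₀ - p with haup
  have hkeyup : ∀ x, gup x - (⟪aup, x⟫ + (-c₀ - lam * ‖x₀‖ ^ 2)) =
      lam * ‖x - x₀‖ ^ 2 - (fG x - (⟪p, x⟫ + c₀)) := by
    intro x
    rw [hgup, haup]
    simp only [inner_sub_left, real_inner_smul_left]
    rw [norm_sub_sq_real, real_inner_comm x x₀]
    ring
  have hup1 : ∀ x, 0 ≤ gup x - (⟪aup, x⟫ + (-c₀ - lam * ‖x₀‖ ^ 2)) := by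
    intro x
    have hk := hkeyup x
    have hb' := abs_le.1 (hbound x)
    nlinarith [sq_nonneg ‖x - x₀‖]
  have hup2 : ∀ x, gup x - (⟪aup, x⟫ + (-c₀ - lam * ‖x₀‖ ^ 2)) ≤
      (lam + M₀) * ‖x - x₀‖ ^ 2 := by
    intro x
    have hk := hkeyup x
    have hb' := abs_le.1 (hbound x)
    nlinarith [sq_nonneg ‖x - x₀‖]
  obtain ⟨hupval, hupgradC⟩ :=
    convEnv_touch gup aup (-c₀ - lam * ‖x₀‖ ^ 2) (lam + M₀) x₀ hup1 hup2
  have hupgrad : HasGradientAt (upperT lam fG) p x₀ := by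
    have h := hsq.sub'' hupgradC
    have heq : (2 * lam) • x₀ - aup = p := by rw [haup]; abel
    rw [heq] at h
    exact h
  -- values
  have hlowval' : lowerT lam fG x₀ = f x₀ := by
    have e1 : lowerT lam fG x₀ = convEnv glow x₀ - lam * ‖x₀‖ ^ 2 := rfl
    have e2 : glow x₀ = fG x₀ + lam * ‖x₀‖ ^ 2 := rfl
    rw [e1, hlowval, e2, hfGx₀]
    ring
  have hupval' : upperT lam fG x₀ = f x₀ := by
    have e1 : upperT lam fG x₀ = lam * ‖x₀‖ ^ 2 - convEnv gup x₀ := rfl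
    have e2 : gup x₀ = lam * ‖x₀‖ ^ 2 - fG x₀ := rfl
    rw [e1, hupval, e2, hfGx₀]
    ring
  exact ⟨⟨hupval'.symm, hlowval'.symm⟩, hgradf.differentiableAt,
    by rw [hgradf.gradient, hupgrad.gradient],
    by rw [hgradf.gradient, hlowgrad.gradient]⟩
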